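/- arXiv:1509.05114 — 3 statements merged into one kernel-verified Lean document; each statement's English description precedes it below -/
import Mathlib

section
/- For every i ≥ 2, the i-th term of the lower central series of ν(G) equals γ_i(G)·γ_i(Gφ)·[γ_{i-1}(G), Gφ]·[G, γ_{i-1}(Gφ)]. -/
open Monoid Subgroup
open scoped commutatorElement

/-- The relators of the presentation of ν(G): for all g, h, k ∈ G,
`[g,hφ]^k = [g^k,(h^k)φ]` and `[g,hφ]^(kφ) = [g^k,(h^k)φ]` (exponents denote conjugation). -/
def nuRels (G : Type*) [Group G] : Set (Monoid.Coprod G G) :=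
  { r | ∃ g h k : G,
      r = ((Coprod.inl k)⁻¹ * ⁅(Coprod.inl g : Coprod G G), Coprod.inr h⁆ * Coprod.inl k) *
          (⁅(Coprod.inl (k⁻¹ * g * k) : Coprod G G), Coprod.inr (k⁻¹ * h * k)⁆)⁻¹ ∨
      r = ((Coprod.inr k)⁻¹ * ⁅(Coprod.inl g : Coprod G G), Coprod.inr h⁆ * Coprod.inr k) *
          (⁅(Coprod.inl (k⁻¹ * g * k) : Coprod G G), Coprod.inr (k⁻¹ * h * k)⁆)⁻¹ }

/-- The group ν(G): the quotient of the free product G * Gφ by the defining relations. -/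
def Nu (G : Type*) [Group G] := Coprod G G ⧸ Subgroup.normalClosure (nuRels G)

instance (G : Type*) [Group G] : Group (Nu G) := QuotientGroup.Quotient.group _

/-- The canonical map G → ν(G) (the copy `G`). -/
def nuL (G : Type*) [Group G] : G →* Nu G := (QuotientGroup.mk' _).comp Coprod.inl

/-- The canonical map G → ν(G) (the copy `Gφ`). -/
def nuR (G : Type*) [Group G] : G →* Nu G := (QuotientGroup.mk' _).comp Coprod.inr

namespace NuLCS

variable {G : Type*} [Group G]

lemma rel_L (g h k : G) :
    (nuL G k)⁻¹ * ⁅nuL G g, nuR G h⁆ * nuL G k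
      = ⁅nuL G (k⁻¹ * g * k), nuR G (k⁻¹ * h * k)⁆ := by
  have h1 : (QuotientGroup.mk' (normalClosure (nuRels G)))
      (((Coprod.inl k)⁻¹ * ⁅(Coprod.inl g : Coprod G G), Coprod.inr h⁆ * Coprod.inl k) *
        (⁅(Coprod.inl (k⁻¹ * g * k) : Coprod G G), Coprod.inr (k⁻¹ * h * k)⁆)⁻¹) = 1 :=
    (QuotientGroup.eq_one_iff _).2 (subset_normalClosure ⟨g, h, k, Or.inl rfl⟩)
  rw [map_mul, map_inv, mul_inv_eq_one, map_mul, map_mul, map_inv,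
    map_commutatorElement, map_commutatorElement] at h1
  exact h1

lemma rel_R (g h k : G) :
    (nuR G k)⁻¹ * ⁅nuL G g, nuR G h⁆ * nuR G k
      = ⁅nuL G (k⁻¹ * g * k), nuR G (k⁻¹ * h * k)⁆ := by
  have h1 : (QuotientGroup.mk' (normalClosure (nuRels G)))
      (((Coprod.inr k)⁻¹ * ⁅(Coprod.inl g : Coprod G G), Coprod.inr h⁆ * Coprod.inr k) *
        (⁅(Coprod.inl (k⁻¹ * g * k) : Coprod G G), Coprod.inr (k⁻¹ * h * k)⁆)⁻¹) = 1 :=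
    (QuotientGroup.eq_one_iff _).2 (subset_normalClosure ⟨g, h, k, Or.inr rfl⟩)
  rw [map_mul, map_inv, mul_inv_eq_one, map_mul, map_mul, map_inv,
    map_commutatorElement, map_commutatorElement] at h1
  exact h1

lemma conjL (w g h : G) :
    nuL G w * ⁅nuL G g, nuR G h⁆ * (nuL G w)⁻¹
      = ⁅nuL G (w * g * w⁻¹), nuR G (w * h * w⁻¹)⁆ := by
  have h1 := rel_L g h w⁻¹
  rw [inv_inv, map_inv, inv_inv] at h1
  exact h1

lemma conjR (w g h : G) :
    nuR G w * ⁅nuL G g, nuR G h⁆ * (nuR G w)⁻¹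
      = ⁅nuL G (w * g * w⁻¹), nuR G (w * h * w⁻¹)⁆ := by
  have h1 := rel_R g h w⁻¹
  rw [inv_inv, map_inv, inv_inv] at h1
  exact h1

lemma L_sup_R : (nuL G).range ⊔ (nuR G).range = ⊤ := by
  show ((QuotientGroup.mk' (normalClosure (nuRels G))).comp Coprod.inl).range ⊔
      ((QuotientGroup.mk' (normalClosure (nuRels G))).comp Coprod.inr).range = ⊤
  rw [MonoidHom.range_comp, MonoidHom.range_comp, ← Subgroup.map_sup,
    Coprod.range_inl_sup_range_inr, ← MonoidHom.range_eq_map,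
    MonoidHom.range_eq_top]
  exact QuotientGroup.mk'_surjective _
lemma normal_of_conj {X : Subgroup (Nu G)}
    (hL : ∀ k : G, ∀ n ∈ X, nuL G k * n * (nuL G k)⁻¹ ∈ X)
    (hR : ∀ k : G, ∀ n ∈ X, nuR G k * n * (nuR G k)⁻¹ ∈ X) : X.Normal := by
  rw [← normalizer_eq_top_iff, eq_top_iff, ← L_sup_R (G := G), sup_le_iff]
  constructor
  · rintro _ ⟨k, rfl⟩
    rw [mem_normalizer_iff]
    intro n
    constructor
    · exact hL k n
    · intro hn
      have h2 := hL k⁻¹ _ hn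
      have e : nuL G k⁻¹ * (nuL G k * n * (nuL G k)⁻¹) * (nuL G k⁻¹)⁻¹ = n := by
        rw [map_inv]; group
      rwa [e] at h2
  · rintro _ ⟨k, rfl⟩
    rw [mem_normalizer_iff]
    intro n
    constructor
    · exact hR k n
    · intro hn
      have h2 := hR k⁻¹ _ hn
      have e : nuR G k⁻¹ * (nuR G k * n * (nuR G k)⁻¹) * (nuR G k⁻¹)⁻¹ = n := by
        rw [map_inv]; group
      rwa [e] at h2

/-- E1: conjugation by `nuL k` and by `nuR k` agree on `⁅L,R⁆`. -/
lemma conj_swap {u : Nu G} (hu : u ∈ ⁅(nuL G).range, (nuR G).range⁆) (k : G) :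
    nuL G k * u * (nuL G k)⁻¹ = nuR G k * u * (nuR G k)⁻¹ := by
  let f := (MulAut.conj (nuL G k)).toMonoidHom
  let f' := (MulAut.conj (nuR G k)).toMonoidHom
  have key : Set.EqOn f f' (⁅(nuL G).range, (nuR G).range⁆ : Subgroup (Nu G)) := by
    rw [Subgroup.commutator_def]
    apply MonoidHom.eqOn_closure
    rintro x ⟨p, ⟨a, rfl⟩, q, ⟨b, rfl⟩, rfl⟩
    show nuL G k * _ * (nuL G k)⁻¹ = nuR G k * _ * (nuR G k)⁻¹
    rw [conjL, conjR]
  exact key hu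

lemma comm_swap {u : Nu G} (hu : u ∈ ⁅(nuL G).range, (nuR G).range⁆) (k : G) :
    ⁅u, nuL G k⁆ = ⁅u, nuR G k⁆ := by
  have h := conj_swap hu k
  calc ⁅u, nuL G k⁆ = u * (nuL G k * u * (nuL G k)⁻¹)⁻¹ := by
        simp only [commutatorElement_def]; group
    _ = u * (nuR G k * u * (nuR G k)⁻¹)⁻¹ := by rw [h]
    _ = ⁅u, nuR G k⁆ := by simp only [commutatorElement_def]; group

lemma conj_comm_le_L (X Y : Subgroup G) [hX : X.Normal] [hY : Y.Normal] (k : G) :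
    ∀ n ∈ ⁅X.map (nuL G), Y.map (nuR G)⁆,
      nuL G k * n * (nuL G k)⁻¹ ∈ ⁅X.map (nuL G), Y.map (nuR G)⁆ := by
  intro n hn
  let f := (MulAut.conj (nuL G k)).toMonoidHom
  have hle : Subgroup.map f ⁅X.map (nuL G), Y.map (nuR G)⁆ ≤ ⁅X.map (nuL G), Y.map (nuR G)⁆ := by
    rw [Subgroup.commutator_def, MonoidHom.map_closure, closure_le]
    rintro _ ⟨x, ⟨p, ⟨a, ha, rfl⟩, q, ⟨b, hb, rfl⟩, rfl⟩, rfl⟩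
    have : f ⁅nuL G a, nuR G b⁆ = ⁅nuL G (k * a * k⁻¹), nuR G (k * b * k⁻¹)⁆ := conjL k a b
    rw [SetLike.mem_coe, this]
    exact commutator_mem_commutator (mem_map_of_mem _ (hX.conj_mem a ha k))
      (mem_map_of_mem _ (hY.conj_mem b hb k))
  exact hle (mem_map_of_mem f hn)

lemma conj_comm_le_R (X Y : Subgroup G) [hX : X.Normal] [hY : Y.Normal] (k : G) :
    ∀ n ∈ ⁅X.map (nuL G), Y.map (nuR G)⁆,
      nuR G k * n * (nuR G k)⁻¹ ∈ ⁅X.map (nuL G), Y.map (nuR G)⁆ := by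
  intro n hn
  let f := (MulAut.conj (nuR G k)).toMonoidHom
  have hle : Subgroup.map f ⁅X.map (nuL G), Y.map (nuR G)⁆ ≤ ⁅X.map (nuL G), Y.map (nuR G)⁆ := by
    rw [Subgroup.commutator_def, MonoidHom.map_closure, closure_le]
    rintro _ ⟨x, ⟨p, ⟨a, ha, rfl⟩, q, ⟨b, hb, rfl⟩, rfl⟩, rfl⟩
    have : f ⁅nuL G a, nuR G b⁆ = ⁅nuL G (k * a * k⁻¹), nuR G (k * b * k⁻¹)⁆ := conjR k a b
    rw [SetLike.mem_coe, this]
    exact commutator_mem_commutator (mem_map_of_mem _ (hX.conj_mem a ha k))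
      (mem_map_of_mem _ (hY.conj_mem b hb k))
  exact hle (mem_map_of_mem f hn)

lemma U_normal : (⁅(nuL G).range, (nuR G).range⁆ : Subgroup (Nu G)).Normal := by
  have e1 : (nuL G).range = Subgroup.map (nuL G) (⊤ : Subgroup G) := MonoidHom.range_eq_map _
  have e2 : (nuR G).range = Subgroup.map (nuR G) (⊤ : Subgroup G) := MonoidHom.range_eq_map _
  rw [e1, e2]
  exact normal_of_conj (fun k => conj_comm_le_L ⊤ ⊤ k) (fun k => conj_comm_le_R ⊤ ⊤ k)
/-- Peiffer-type identity: an element of `⁅L,R⁆` is conjugated by `⁅nuL x, nuR y⁆`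
exactly as by `nuL ⁅x,y⁆`. -/
lemma peiffer {u : Nu G} (hu : u ∈ ⁅(nuL G).range, (nuR G).range⁆) (x y : G) :
    ⁅nuL G x, nuR G y⁆ * u * ⁅nuL G x, nuR G y⁆⁻¹
      = nuL G ⁅x, y⁆ * u * (nuL G ⁅x, y⁆)⁻¹ := by
  have U_norm := U_normal (G := G)
  have s1 : (nuR G y)⁻¹ * u * nuR G y = (nuL G y)⁻¹ * u * nuL G y := by
    have h := conj_swap hu y⁻¹
    rw [map_inv, map_inv, inv_inv, inv_inv] at h
    exact h.symm
  have hmem1 : (nuL G y)⁻¹ * u * nuL G y ∈ ⁅(nuL G).range, (nuR G).range⁆ := by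
    have := U_norm.conj_mem u hu (nuL G y)⁻¹
    rwa [inv_inv] at this
  have hmem2 : (nuL G x)⁻¹ * ((nuL G y)⁻¹ * u * nuL G y) * nuL G x
      ∈ ⁅(nuL G).range, (nuR G).range⁆ := by
    have := U_norm.conj_mem _ hmem1 (nuL G x)⁻¹
    rwa [inv_inv] at this
  have s2 : nuR G y * ((nuL G x)⁻¹ * ((nuL G y)⁻¹ * u * nuL G y) * nuL G x) * (nuR G y)⁻¹
      = nuL G y * ((nuL G x)⁻¹ * ((nuL G y)⁻¹ * u * nuL G y) * nuL G x) * (nuL G y)⁻¹ :=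
    (conj_swap hmem2 y).symm
  calc ⁅nuL G x, nuR G y⁆ * u * ⁅nuL G x, nuR G y⁆⁻¹
      = nuL G x *
          (nuR G y * ((nuL G x)⁻¹ * ((nuR G y)⁻¹ * u * nuR G y) * nuL G x) * (nuR G y)⁻¹) *
          (nuL G x)⁻¹ := by
        simp only [commutatorElement_def]; group
    _ = nuL G x *
          (nuR G y * ((nuL G x)⁻¹ * ((nuL G y)⁻¹ * u * nuL G y) * nuL G x) * (nuR G y)⁻¹) *
          (nuL G x)⁻¹ := by rw [s1]
    _ = nuL G x *
          (nuL G y * ((nuL G x)⁻¹ * ((nuL G y)⁻¹ * u * nuL G y) * nuL G x) * (nuL G y)⁻¹) *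
          (nuL G x)⁻¹ := by rw [s2]
    _ = nuL G ⁅x, y⁆ * u * (nuL G ⁅x, y⁆)⁻¹ := by
        rw [map_commutatorElement]
        simp only [commutatorElement_def]; group

lemma I2 (x y : G) :
    ⁅nuL G x, nuR G y⁻¹⁆ = ⁅nuL G (y⁻¹ * x * y), nuR G y⁆⁻¹ := by
  have h := rel_R (G := G) x y y
  rw [show (y⁻¹ * y * y : G) = y from by group] at h
  rw [← h]
  simp only [map_inv, commutatorElement_def]; group

/-- The key identity in ν(G): `⁅⁅g,hφ⁆,kφ⁆ = ⁅⁅g,h⁆,kφ⁆`. -/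
lemma key (g h k : G) :
    ⁅⁅nuL G g, nuR G h⁆, nuR G k⁆ = ⁅nuL G ⁅g, h⁆, nuR G k⁆ := by
  have U_norm := U_normal (G := G)
  have sb : nuR G h * ⁅nuL G g⁻¹, nuR G ((h⁻¹ * k * h)⁻¹)⁆ * (nuR G h)⁻¹
      = ⁅nuL G (h * g⁻¹ * h⁻¹), nuR G k⁻¹⁆ := by
    rw [conjR, show (h * (h⁻¹ * k * h)⁻¹ * h⁻¹ : G) = k⁻¹ from by group]
  have lhs1 : ⁅⁅nuL G g, nuR G h⁆, nuR G k⁆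
      = ⁅nuL G g, nuR G k⁆ *
        (nuR G k *
          (nuL G g * (nuR G h * ⁅nuL G g⁻¹, nuR G ((h⁻¹ * k * h)⁻¹)⁆ * (nuR G h)⁻¹) *
            (nuL G g)⁻¹) * (nuR G k)⁻¹)⁻¹ := by
    simp only [commutatorElement_def, map_inv, map_mul]; group
  rw [sb, conjL g (h * g⁻¹ * h⁻¹) k⁻¹, conjR k (g * (h * g⁻¹ * h⁻¹) * g⁻¹) (g * k⁻¹ * g⁻¹)]
    at lhs1
  rw [show (k * (g * k⁻¹ * g⁻¹) * k⁻¹ : G) = (k * g * k * g⁻¹ * k⁻¹)⁻¹ from by group] at lhs1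
  rw [I2 (k * (g * (h * g⁻¹ * h⁻¹) * g⁻¹) * k⁻¹) (k * g * k * g⁻¹ * k⁻¹), inv_inv] at lhs1
  -- right-hand side
  have r1 : ⁅nuL G ⁅g, h⁆, nuR G k⁆
      = nuL G g * ⁅nuL G (h * g⁻¹ * h⁻¹), nuR G k⁆ * (nuL G g)⁻¹ * ⁅nuL G g, nuR G k⁆ := by
    rw [show (⁅g, h⁆ : G) = g * (h * g⁻¹ * h⁻¹) from by
      simp only [commutatorElement_def]; group, map_mul]
    simp only [commutatorElement_def]; group
  rw [conjL g (h * g⁻¹ * h⁻¹) k] at r1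
  have hV : ⁅nuL G (g * (h * g⁻¹ * h⁻¹) * g⁻¹), nuR G (g * k * g⁻¹)⁆
      ∈ ⁅(nuL G).range, (nuR G).range⁆ :=
    commutator_mem_commutator ⟨_, rfl⟩ ⟨_, rfl⟩
  have hVC : (nuL G ⁅g, k⁆)⁻¹ * ⁅nuL G (g * (h * g⁻¹ * h⁻¹) * g⁻¹), nuR G (g * k * g⁻¹)⁆ *
      nuL G ⁅g, k⁆ ∈ ⁅(nuL G).range, (nuR G).range⁆ := by
    have := U_norm.conj_mem _ hV (nuL G ⁅g, k⁆)⁻¹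
    rwa [inv_inv] at this
  have r3 := peiffer hVC g k
  have e : nuL G ⁅g, k⁆ *
      ((nuL G ⁅g, k⁆)⁻¹ * ⁅nuL G (g * (h * g⁻¹ * h⁻¹) * g⁻¹), nuR G (g * k * g⁻¹)⁆ *
        nuL G ⁅g, k⁆) * (nuL G ⁅g, k⁆)⁻¹
      = ⁅nuL G (g * (h * g⁻¹ * h⁻¹) * g⁻¹), nuR G (g * k * g⁻¹)⁆ := by group
  rw [e] at r3
  have r3' : ⁅nuL G (g * (h * g⁻¹ * h⁻¹) * g⁻¹), nuR G (g * k * g⁻¹)⁆ * ⁅nuL G g, nuR G k⁆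
      = ⁅nuL G g, nuR G k⁆ *
        ((nuL G ⁅g, k⁆)⁻¹ * ⁅nuL G (g * (h * g⁻¹ * h⁻¹) * g⁻¹), nuR G (g * k * g⁻¹)⁆ *
          nuL G ⁅g, k⁆) := by
    conv_lhs => rw [← r3]
    group
  rw [rel_L (g * (h * g⁻¹ * h⁻¹) * g⁻¹) (g * k * g⁻¹) ⁅g, k⁆] at r3'
  rw [r3'] at r1
  rw [lhs1, r1,
    show ((k * g * k * g⁻¹ * k⁻¹)⁻¹ * (k * (g * (h * g⁻¹ * h⁻¹) * g⁻¹) * k⁻¹) *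
        (k * g * k * g⁻¹ * k⁻¹) : G)
      = ⁅g, k⁆⁻¹ * (g * (h * g⁻¹ * h⁻¹) * g⁻¹) * ⁅g, k⁆ from by
        simp only [commutatorElement_def]; group,
    show (k * g * k * g⁻¹ * k⁻¹ : G) = ⁅g, k⁆⁻¹ * (g * k * g⁻¹) * ⁅g, k⁆ from by
        simp only [commutatorElement_def]; group]
lemma commutator_closure_left_le {S : Set (Nu G)} {K N : Subgroup (Nu G)} (hN : N.Normal)
    (h : ∀ s ∈ S, ∀ y ∈ K, ⁅s, y⁆ ∈ N) : ⁅closure S, K⁆ ≤ N := by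
  rw [commutator_le]
  intro x hx
  induction hx using closure_induction with
  | mem a ha => exact h a ha
  | one =>
    intro y hy
    rw [show ⁅(1 : Nu G), y⁆ = 1 from by simp only [commutatorElement_def]; group]
    exact N.one_mem
  | mul a b ha hb pa pb =>
    intro y hy
    rw [show ⁅a * b, y⁆ = a * ⁅b, y⁆ * a⁻¹ * ⁅a, y⁆ from by
      simp only [commutatorElement_def]; group]
    exact mul_mem (hN.conj_mem _ (pb y hy) a) (pa y hy)
  | inv a ha pa =>
    intro y hy
    rw [show ⁅a⁻¹, y⁆ = a⁻¹ * ⁅a, y⁆⁻¹ * (a⁻¹)⁻¹ from by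
      simp only [commutatorElement_def]; group]
    exact hN.conj_mem _ (inv_mem (pa y hy)) a⁻¹

lemma commutator_closure_right_le {S : Set (Nu G)} {K N : Subgroup (Nu G)} (hN : N.Normal)
    (h : ∀ y ∈ K, ∀ s ∈ S, ⁅y, s⁆ ∈ N) : ⁅K, closure S⁆ ≤ N := by
  rw [commutator_le]
  intro y hy x hx
  induction hx using closure_induction with
  | mem a ha => exact h y hy a ha
  | one =>
    rw [show ⁅y, (1 : Nu G)⁆ = 1 from by simp only [commutatorElement_def]; group]
    exact N.one_mem
  | mul a b ha hb pa pb =>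
    rw [show ⁅y, a * b⁆ = ⁅y, a⁆ * (a * ⁅y, b⁆ * a⁻¹) from by
      simp only [commutatorElement_def]; group]
    exact mul_mem pa (hN.conj_mem _ pb a)
  | inv a ha pa =>
    rw [show ⁅y, a⁻¹⁆ = a⁻¹ * ⁅y, a⁆⁻¹ * (a⁻¹)⁻¹ from by
      simp only [commutatorElement_def]; group]
    exact hN.conj_mem _ (inv_mem pa) a⁻¹

lemma commutator_sup_left_le {H₁ H₂ K N : Subgroup (Nu G)} (hN : N.Normal)
    (h1 : ⁅H₁, K⁆ ≤ N) (h2 : ⁅H₂, K⁆ ≤ N) : ⁅H₁ ⊔ H₂, K⁆ ≤ N := by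
  have e : H₁ ⊔ H₂ = closure ((H₁ : Set (Nu G)) ∪ (H₂ : Set (Nu G))) := by
    rw [Subgroup.closure_union, closure_eq, closure_eq]
  rw [e]
  refine commutator_closure_left_le hN ?_
  rintro s (hs | hs) y hy
  · exact h1 (commutator_mem_commutator hs hy)
  · exact h2 (commutator_mem_commutator hs hy)

lemma commutator_sup_right_le {H K₁ K₂ N : Subgroup (Nu G)} (hN : N.Normal)
    (h1 : ⁅H, K₁⁆ ≤ N) (h2 : ⁅H, K₂⁆ ≤ N) : ⁅H, K₁ ⊔ K₂⁆ ≤ N := by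
  have e : K₁ ⊔ K₂ = closure ((K₁ : Set (Nu G)) ∪ (K₂ : Set (Nu G))) := by
    rw [Subgroup.closure_union, closure_eq, closure_eq]
  rw [e]
  refine commutator_closure_right_le hN ?_
  rintro y hy s (hs | hs)
  · exact h1 (commutator_mem_commutator hy hs)
  · exact h2 (commutator_mem_commutator hy hs)

lemma comm_mixed_le_R (X Y : Subgroup G) {N : Subgroup (Nu G)} (hN : N.Normal)
    (h : ∀ a ∈ X, ∀ b ∈ Y, ∀ k : G, ⁅nuL G ⁅a, b⁆, nuR G k⁆ ∈ N) :
    ⁅⁅X.map (nuL G), Y.map (nuR G)⁆, (⊤ : Subgroup G).map (nuR G)⁆ ≤ N := by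
  rw [Subgroup.commutator_def (X.map (nuL G)) (Y.map (nuR G))]
  refine commutator_closure_left_le hN ?_
  rintro s ⟨p, ⟨a, ha, rfl⟩, q, ⟨b, hb, rfl⟩, rfl⟩ y ⟨kk, -, rfl⟩
  rw [key]
  exact h a ha b hb kk

lemma comm_mixed_le_L (X Y : Subgroup G) {N : Subgroup (Nu G)} (hN : N.Normal)
    (h : ∀ a ∈ X, ∀ b ∈ Y, ∀ k : G, ⁅nuL G ⁅a, b⁆, nuR G k⁆ ∈ N) :
    ⁅⁅X.map (nuL G), Y.map (nuR G)⁆, (⊤ : Subgroup G).map (nuL G)⁆ ≤ N := by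
  rw [Subgroup.commutator_def (X.map (nuL G)) (Y.map (nuR G))]
  refine commutator_closure_left_le hN ?_
  rintro s ⟨p, ⟨a, ha, rfl⟩, q, ⟨b, hb, rfl⟩, rfl⟩ y ⟨kk, -, rfl⟩
  have hs : ⁅nuL G a, nuR G b⁆ ∈ ⁅(nuL G).range, (nuR G).range⁆ :=
    commutator_mem_commutator ⟨a, rfl⟩ ⟨b, rfl⟩
  rw [comm_swap hs kk, key]
  exact h a ha b hb kk
/-- The candidate for the (j+2)-nd term of the lower central series of ν(G). -/
def NN (j : ℕ) : Subgroup (Nu G) :=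
  (Subgroup.lowerCentralSeries (⊤ : Subgroup G) (j + 1)).map (nuL G) ⊔ (Subgroup.lowerCentralSeries (⊤ : Subgroup G) (j + 1)).map (nuR G) ⊔
    ⁅(Subgroup.lowerCentralSeries (⊤ : Subgroup G) j).map (nuL G), (⊤ : Subgroup G).map (nuR G)⁆ ⊔
    ⁅(⊤ : Subgroup G).map (nuL G), (Subgroup.lowerCentralSeries (⊤ : Subgroup G) j).map (nuR G)⁆

lemma NN_def (j : ℕ) : NN (G := G) j =
    (Subgroup.lowerCentralSeries (⊤ : Subgroup G) (j + 1)).map (nuL G) ⊔ (Subgroup.lowerCentralSeries (⊤ : Subgroup G) (j + 1)).map (nuR G) ⊔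
      ⁅(Subgroup.lowerCentralSeries (⊤ : Subgroup G) j).map (nuL G), (⊤ : Subgroup G).map (nuR G)⁆ ⊔
      ⁅(⊤ : Subgroup G).map (nuL G), (Subgroup.lowerCentralSeries (⊤ : Subgroup G) j).map (nuR G)⁆ := rfl

lemma NN_normal (j : ℕ) : (NN (G := G) j).Normal := by
  have hBle : (Subgroup.lowerCentralSeries (⊤ : Subgroup G) (j + 1)).map (nuR G)
      ≤ (Subgroup.lowerCentralSeries (⊤ : Subgroup G) j).map (nuR G) :=
    Subgroup.map_mono (Subgroup.lowerCentralSeries_antitone _ (Nat.le_succ j))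
  have hAle : (Subgroup.lowerCentralSeries (⊤ : Subgroup G) (j + 1)).map (nuL G)
      ≤ (Subgroup.lowerCentralSeries (⊤ : Subgroup G) j).map (nuL G) :=
    Subgroup.map_mono (Subgroup.lowerCentralSeries_antitone _ (Nat.le_succ j))
  apply normal_of_conj
  · intro k n hn
    let f := (MulAut.conj (nuL G k)).toMonoidHom
    have happ : ∀ x : Nu G, f x = nuL G k * x * (nuL G k)⁻¹ := fun _ => rfl
    have hle : Subgroup.map f (NN (G := G) j) ≤ NN (G := G) j := by
      rw [NN_def, Subgroup.map_sup, Subgroup.map_sup, Subgroup.map_sup]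
      refine sup_le (sup_le (sup_le ?_ ?_) ?_) ?_
      · rintro _ ⟨_, ⟨a, ha, rfl⟩, rfl⟩
        rw [happ, show nuL G k * nuL G a * (nuL G k)⁻¹ = nuL G (k * a * k⁻¹) from by
          simp only [map_mul, map_inv]]
        exact mem_sup_left (mem_sup_left (mem_sup_left
          (mem_map_of_mem _ ((inferInstance : (Subgroup.lowerCentralSeries (⊤ : Subgroup G) (j + 1)).Normal).conj_mem a ha k))))
      · rintro _ ⟨_, ⟨b, hb, rfl⟩, rfl⟩
        rw [happ, show nuL G k * nuR G b * (nuL G k)⁻¹ = ⁅nuL G k, nuR G b⁆ * nuR G b from by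
          simp only [commutatorElement_def]; group]
        refine mul_mem ?_ (mem_sup_left (mem_sup_left (mem_sup_right (mem_map_of_mem _ hb))))
        exact mem_sup_right (commutator_mem_commutator (mem_map_of_mem _ (mem_top k))
          (mem_map_of_mem _ (Subgroup.lowerCentralSeries_antitone _ (Nat.le_succ j) hb)))
      · rintro _ ⟨n', hn', rfl⟩
        exact mem_sup_left (mem_sup_right
          (conj_comm_le_L (Subgroup.lowerCentralSeries (⊤ : Subgroup G) j) ⊤ k n' hn'))
      · rintro _ ⟨n', hn', rfl⟩
        exact mem_sup_right (conj_comm_le_L ⊤ (Subgroup.lowerCentralSeries (⊤ : Subgroup G) j) k n' hn')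
    exact hle (mem_map_of_mem f hn)
  · intro k n hn
    let f := (MulAut.conj (nuR G k)).toMonoidHom
    have happ : ∀ x : Nu G, f x = nuR G k * x * (nuR G k)⁻¹ := fun _ => rfl
    have hle : Subgroup.map f (NN (G := G) j) ≤ NN (G := G) j := by
      rw [NN_def, Subgroup.map_sup, Subgroup.map_sup, Subgroup.map_sup]
      refine sup_le (sup_le (sup_le ?_ ?_) ?_) ?_
      · rintro _ ⟨_, ⟨a, ha, rfl⟩, rfl⟩
        rw [happ, show nuR G k * nuL G a * (nuR G k)⁻¹ = ⁅nuL G a, nuR G k⁆⁻¹ * nuL G a from by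
          simp only [commutatorElement_def]; group]
        refine mul_mem ?_ (mem_sup_left (mem_sup_left (mem_sup_left (mem_map_of_mem _ ha))))
        refine mem_sup_left (mem_sup_right (inv_mem ?_))
        exact commutator_mem_commutator
          (mem_map_of_mem _ (Subgroup.lowerCentralSeries_antitone _ (Nat.le_succ j) ha))
          (mem_map_of_mem _ (mem_top k))
      · rintro _ ⟨_, ⟨b, hb, rfl⟩, rfl⟩
        rw [happ, show nuR G k * nuR G b * (nuR G k)⁻¹ = nuR G (k * b * k⁻¹) from by
          simp only [map_mul, map_inv]]
        exact mem_sup_left (mem_sup_left (mem_sup_right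
          (mem_map_of_mem _ ((inferInstance : (Subgroup.lowerCentralSeries (⊤ : Subgroup G) (j + 1)).Normal).conj_mem b hb k))))
      · rintro _ ⟨n', hn', rfl⟩
        exact mem_sup_left (mem_sup_right
          (conj_comm_le_R (Subgroup.lowerCentralSeries (⊤ : Subgroup G) j) ⊤ k n' hn'))
      · rintro _ ⟨n', hn', rfl⟩
        exact mem_sup_right (conj_comm_le_R ⊤ (Subgroup.lowerCentralSeries (⊤ : Subgroup G) j) k n' hn')
    exact hle (mem_map_of_mem f hn)
lemma main (j : ℕ) : Subgroup.lowerCentralSeries (⊤ : Subgroup (Nu G)) (j + 1) = NN (G := G) j := by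
  have htop : (⊤ : Subgroup (Nu G))
      = (⊤ : Subgroup G).map (nuL G) ⊔ (⊤ : Subgroup G).map (nuR G) := by
    rw [← MonoidHom.range_eq_map, ← MonoidHom.range_eq_map, L_sup_R]
  induction j with
  | zero =>
    apply le_antisymm
    · show ⁅Subgroup.lowerCentralSeries (⊤ : Subgroup (Nu G)) 0, ⊤⁆ ≤ NN (G := G) 0
      rw [Subgroup.lowerCentralSeries_zero, htop]
      refine commutator_sup_left_le (NN_normal 0) ?_ ?_
      · refine commutator_sup_right_le (NN_normal 0) ?_ ?_
        · rw [← Subgroup.map_commutator]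
          exact le_sup_of_le_left (le_sup_of_le_left le_sup_left)
        · exact le_sup_of_le_left le_sup_right
      · refine commutator_sup_right_le (NN_normal 0) ?_ ?_
        · rw [Subgroup.commutator_comm]
          exact le_sup_right
        · rw [← Subgroup.map_commutator]
          exact le_sup_of_le_left (le_sup_of_le_left le_sup_right)
    · refine sup_le (sup_le (sup_le ?_ ?_) ?_) ?_
      · exact Subgroup.lowerCentralSeries.map (nuL G) 1
      · exact Subgroup.lowerCentralSeries.map (nuR G) 1
      · show _ ≤ ⁅(⊤ : Subgroup (Nu G)), ⊤⁆
        exact commutator_mono le_top le_top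
      · show _ ≤ ⁅(⊤ : Subgroup (Nu G)), ⊤⁆
        exact commutator_mono le_top le_top
  | succ j ih =>
    apply le_antisymm
    · show ⁅Subgroup.lowerCentralSeries (⊤ : Subgroup (Nu G)) (j + 1), ⊤⁆ ≤ NN (G := G) (j + 1)
      rw [ih, htop]
      have hmem : ∀ a ∈ Subgroup.lowerCentralSeries (⊤ : Subgroup G) j, ∀ b ∈ (⊤ : Subgroup G), ∀ k : G,
          ⁅nuL G ⁅a, b⁆, nuR G k⁆ ∈ NN (G := G) (j + 1) := by
        intro a ha b hb k
        refine mem_sup_left (mem_sup_right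
          (commutator_mem_commutator (mem_map_of_mem _ ?_) (mem_map_of_mem _ (mem_top k))))
        show ⁅a, b⁆ ∈ ⁅Subgroup.lowerCentralSeries (⊤ : Subgroup G) j, ⊤⁆
        exact commutator_mem_commutator ha (mem_top b)
      have hmem' : ∀ a ∈ (⊤ : Subgroup G), ∀ b ∈ Subgroup.lowerCentralSeries (⊤ : Subgroup G) j, ∀ k : G,
          ⁅nuL G ⁅a, b⁆, nuR G k⁆ ∈ NN (G := G) (j + 1) := by
        intro a ha b hb k
        refine mem_sup_left (mem_sup_right
          (commutator_mem_commutator (mem_map_of_mem _ ?_) (mem_map_of_mem _ (mem_top k))))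
        show ⁅a, b⁆ ∈ Subgroup.lowerCentralSeries (⊤ : Subgroup G) (j + 1)
        rw [← commutatorElement_inv]
        exact inv_mem (show ⁅b, a⁆ ∈ ⁅Subgroup.lowerCentralSeries (⊤ : Subgroup G) j, ⊤⁆ from
          commutator_mem_commutator hb (mem_top a))
      refine commutator_sup_right_le (NN_normal (j + 1)) ?_ ?_
      · rw [NN_def j]
        refine commutator_sup_left_le (NN_normal (j + 1))
          (commutator_sup_left_le (NN_normal (j + 1))
            (commutator_sup_left_le (NN_normal (j + 1)) ?_ ?_) ?_) ?_
        · rw [← Subgroup.map_commutator]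
          exact le_sup_of_le_left (le_sup_of_le_left le_sup_left)
        · rw [Subgroup.commutator_comm]
          exact le_sup_right
        · exact comm_mixed_le_L (Subgroup.lowerCentralSeries (⊤ : Subgroup G) j) ⊤ (NN_normal (j + 1)) hmem
        · exact comm_mixed_le_L ⊤ (Subgroup.lowerCentralSeries (⊤ : Subgroup G) j) (NN_normal (j + 1)) hmem'
      · rw [NN_def j]
        refine commutator_sup_left_le (NN_normal (j + 1))
          (commutator_sup_left_le (NN_normal (j + 1))
            (commutator_sup_left_le (NN_normal (j + 1)) ?_ ?_) ?_) ?_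
        · refine le_trans (commutator_mono ?_ le_rfl) (le_sup_of_le_left le_sup_right)
          exact Subgroup.map_mono le_rfl
        · rw [← Subgroup.map_commutator]
          exact le_sup_of_le_left (le_sup_of_le_left le_sup_right)
        · exact comm_mixed_le_R (Subgroup.lowerCentralSeries (⊤ : Subgroup G) j) ⊤ (NN_normal (j + 1)) hmem
        · exact comm_mixed_le_R ⊤ (Subgroup.lowerCentralSeries (⊤ : Subgroup G) j) (NN_normal (j + 1)) hmem'
    · refine sup_le (sup_le (sup_le ?_ ?_) ?_) ?_
      · exact Subgroup.lowerCentralSeries.map (nuL G) (j + 2)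
      · exact Subgroup.lowerCentralSeries.map (nuR G) (j + 2)
      · show _ ≤ ⁅Subgroup.lowerCentralSeries (⊤ : Subgroup (Nu G)) (j + 1), ⊤⁆
        exact commutator_mono (Subgroup.lowerCentralSeries.map (nuL G) (j + 1)) le_top
      · show _ ≤ ⁅Subgroup.lowerCentralSeries (⊤ : Subgroup (Nu G)) (j + 1), ⊤⁆
        rw [Subgroup.commutator_comm]
        exact commutator_mono (Subgroup.lowerCentralSeries.map (nuR G) (j + 1)) le_top

end NuLCS

/-- For i ≥ 2 (here i = j + 2):
γ_i(ν(G)) = γ_i(G)·γ_i(Gφ)·[γ_{i-1}(G),Gφ]·[G,γ_{i-1}(Gφ)].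
(Recall γ_i corresponds to `Subgroup.lowerCentralSeries _ (i-1)`.) -/
theorem nu_lower_central (G : Type*) [Group G] (j : ℕ) :
    Subgroup.lowerCentralSeries (⊤ : Subgroup (Nu G)) (j + 1) =
      (Subgroup.lowerCentralSeries (⊤ : Subgroup G) (j + 1)).map (nuL G) ⊔ (Subgroup.lowerCentralSeries (⊤ : Subgroup G) (j + 1)).map (nuR G) ⊔
        ⁅(Subgroup.lowerCentralSeries (⊤ : Subgroup G) j).map (nuL G), (nuR G).range⁆ ⊔
        ⁅(nuL G).range, (Subgroup.lowerCentralSeries (⊤ : Subgroup G) j).map (nuR G)⁆ := by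
  rw [MonoidHom.range_eq_map (nuR G), MonoidHom.range_eq_map (nuL G)]
  exact NuLCS.main j
end

section
/- For every i ≥ 2, the i-th term of the derived series of ν(G) equals G^(i)·(Gφ)^(i)·[G^(i-1), (Gφ)^(i-1)]. In particular, ν(G)' = [G,Gφ]·G'·(G')φ. -/
set_option linter.unusedTactic false
set_option maxHeartbeats 1000000


open Monoid Subgroup
open scoped commutatorElement

namespace NuProof

/-! ### Elementary conjugation/commutator algebra -/

section Elem

variable {E : Type*} [Group E]

/-- conjugation `x ^ w` -/
def cj (x w : E) : E := w⁻¹ * x * w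

/-- "old-style" commutator `[x,y] = x⁻¹y⁻¹xy` -/
def br (x y : E) : E := x⁻¹ * y⁻¹ * x * y

lemma cj_one_right (x : E) : cj x 1 = x := by simp [cj]
lemma cj_one_left (w : E) : cj (1 : E) w = 1 := by simp [cj]
lemma cj_cj (x a b : E) : cj (cj x a) b = cj x (a * b) := by simp only [cj]; group
lemma cj_mul (x y w : E) : cj (x * y) w = cj x w * cj y w := by simp only [cj]; group
lemma cj_inv (x w : E) : cj x⁻¹ w = (cj x w)⁻¹ := by simp only [cj]; group
lemma br_rev (x y : E) : br x y = (br y x)⁻¹ := by simp only [br]; group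
lemma cj_eq_mul_br (x w : E) : cj x w = x * br x w := by simp only [cj, br]; group
lemma br_eq (x w : E) : br x w = x⁻¹ * cj x w := by simp only [cj, br]; group
lemma brF1 (x y z : E) : br (x * y) z = cj (br x z) y * br y z := by
  simp only [cj, br]; group
lemma brF2 (x y z : E) : br x (y * z) = br x z * cj (br x y) z := by
  simp only [cj, br]; group
lemma brF3 (x y : E) : br x y⁻¹ = (cj (br x y) y⁻¹)⁻¹ := by simp only [cj, br]; group
lemma brF4 (x y : E) : br x⁻¹ y = (cj (br x y) x⁻¹)⁻¹ := by simp only [cj, br]; group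
lemma br_one_left (y : E) : br 1 y = 1 := by simp [br]
lemma br_one_right (x : E) : br x 1 = 1 := by simp [br]
lemma bracket_eq_br (x y : E) : ⁅x, y⁆ = br x⁻¹ y⁻¹ := by
  simp only [br, commutatorElement_def]; group
lemma br_eq_bracket (x y : E) : br x y = ⁅x⁻¹, y⁻¹⁆ := by
  simp only [br, commutatorElement_def]; group
lemma mul_cj_inv (x y : E) : x * cj y⁻¹ x = y⁻¹ * x := by simp only [cj]; group

lemma br_mem_commutator {H K : Subgroup E} {x y : E} (hx : x ∈ H) (hy : y ∈ K) :
    br x y ∈ ⁅H, K⁆ := by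
  rw [br_eq_bracket]
  exact commutator_mem_commutator (inv_mem hx) (inv_mem hy)

lemma cj_mem_of_normal {H : Subgroup E} (hH : H.Normal) {x : E} (hx : x ∈ H) (w : E) :
    cj x w ∈ H := by
  have := hH.conj_mem x hx w⁻¹
  simpa [cj] using this

/-- conjugation as a hom -/
def cjHom (w : E) : E →* E := (MulAut.conj w⁻¹).toMonoidHom

lemma cjHom_apply (w x : E) : cjHom w x = cj x w := by
  simp [cjHom, cj, MulAut.conj]

/-- If every generator is sent into `H` by `f`, then all of `H` is. -/
lemma map_self_of_gen {H : Subgroup E} {S : Set E} (hgen : Subgroup.closure S = H)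
    (f : E →* E) (hf : ∀ s ∈ S, f s ∈ H) : ∀ x ∈ H, f x ∈ H := by
  intro x hx
  have h1 : Subgroup.closure S ≤ H.comap f :=
    (Subgroup.closure_le _).mpr fun s hs => Subgroup.mem_comap.mpr (hf s hs)
  rw [hgen] at h1
  exact h1 hx

end Elem

/-! ### The abstract core: two homs satisfying the ν-relations -/

section Core

variable {G : Type*} [Group G] {E : Type*} [Group E] (u v : G →* E)

/-- the subgroup `[u(G), v(G)]` -/
def TS : Subgroup E := ⁅u.range, v.range⁆

lemma bracket_mem_TS (g h : G) : ⁅u g, v h⁆ ∈ TS u v :=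
  commutator_mem_commutator ⟨g, rfl⟩ ⟨h, rfl⟩

lemma br_mem_TS (g h : G) : br (u g) (v h) ∈ TS u v := by
  rw [br_eq_bracket, ← map_inv, ← map_inv]
  exact bracket_mem_TS u v _ _

section Rels

variable
  {relu : ∀ g h k : G, cj ⁅u g, v h⁆ (u k) = ⁅u (k⁻¹ * g * k), v (k⁻¹ * h * k)⁆}
  {relv : ∀ g h k : G, cj ⁅u g, v h⁆ (v k) = ⁅u (k⁻¹ * g * k), v (k⁻¹ * h * k)⁆}

include relu relv in
lemma coreE1 : ∀ t ∈ TS u v, ∀ k : G, cj t (u k) = cj t (v k) := by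
  let S : Subgroup E :=
    { carrier := { t : E | ∀ k : G, cj t (u k) = cj t (v k) }
      one_mem' := by intro k; simp [cj]
      mul_mem' := by
        intro a b ha hb
        intro k
        rw [cj_mul, cj_mul, ha k, hb k]
      inv_mem' := by
        intro a ha k
        rw [cj_inv, cj_inv, ha k] }
  have hle : TS u v ≤ S := by
    rw [TS]
    refine commutator_le.mpr ?_
    rintro x ⟨g, rfl⟩ y ⟨h, rfl⟩
    intro k
    rw [relu g h k, relv g h k]
  exact fun t ht k => hle ht k

include relu relv in
lemma coreTconj : ∀ t ∈ TS u v, ∀ k : G, cj t (u k) ∈ TS u v ∧ cj t (v k) ∈ TS u v := by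
  let S : Subgroup E :=
    { carrier := { t : E | ∀ k : G, cj t (u k) ∈ TS u v ∧ cj t (v k) ∈ TS u v }
      one_mem' := by intro k; simp [cj, Subgroup.one_mem]
      mul_mem' := by
        intro a b ha hb k
        exact ⟨by rw [cj_mul]; exact mul_mem (ha k).1 (hb k).1,
               by rw [cj_mul]; exact mul_mem (ha k).2 (hb k).2⟩
      inv_mem' := by
        intro a ha k
        exact ⟨by rw [cj_inv]; exact inv_mem (ha k).1,
               by rw [cj_inv]; exact inv_mem (ha k).2⟩ }
  have hle : TS u v ≤ S := by
    rw [TS]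
    refine commutator_le.mpr ?_
    rintro x ⟨g, rfl⟩ y ⟨h, rfl⟩
    intro k
    rw [relu g h k, relv g h k]
    exact ⟨bracket_mem_TS u v _ _, bracket_mem_TS u v _ _⟩
  exact fun t ht k => hle ht k

include relu relv in
lemma coreE2 : ∀ t ∈ TS u v, ∀ g h : G,
    cj t (br (u g) (v h)) = cj t (u (br g h)) := by
  intro t ht g h
  have hE1 : ∀ t ∈ TS u v, ∀ k : G, cj t (u k) = cj t (v k) :=
    coreE1 u v (relu := relu) (relv := relv)
  have hTc : ∀ t ∈ TS u v, ∀ k : G, cj t (u k) ∈ TS u v ∧ cj t (v k) ∈ TS u v :=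
    coreTconj u v (relu := relu) (relv := relv)
  have e1 : br (u g) (v h) = u g⁻¹ * (v h⁻¹ * (u g * v h)) := by
    simp only [map_inv, br]; group
  have e2 : u (br g h) = u g⁻¹ * (u h⁻¹ * (u g * u h)) := by
    simp only [br, map_mul, map_inv]; group
  rw [e1, e2, ← cj_cj, ← cj_cj, ← cj_cj, ← cj_cj, ← cj_cj, ← cj_cj]
  have h1 : cj t (u g⁻¹) ∈ TS u v := (hTc t ht g⁻¹).1
  rw [← hE1 _ h1 h⁻¹]
  have h2 : cj (cj t (u g⁻¹)) (u h⁻¹) ∈ TS u v := (hTc _ h1 h⁻¹).1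
  have h3 : cj (cj (cj t (u g⁻¹)) (u h⁻¹)) (u g) ∈ TS u v := (hTc _ h2 g).1
  rw [← hE1 _ h3 h]

include relu in
lemma brel_u (g h k : G) :
    cj (br (u g) (v h)) (u k) = br (u (k⁻¹ * g * k)) (v (k⁻¹ * h * k)) := by
  have e1 : k⁻¹ * g⁻¹ * k = (k⁻¹ * g * k)⁻¹ := by group
  have e2 : k⁻¹ * h⁻¹ * k = (k⁻¹ * h * k)⁻¹ := by group
  rw [br_eq_bracket, ← map_inv u, ← map_inv v, relu g⁻¹ h⁻¹ k, e1, e2,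
    map_inv u, map_inv v, ← br_eq_bracket]

include relv in
lemma brel_v (g h k : G) :
    cj (br (u g) (v h)) (v k) = br (u (k⁻¹ * g * k)) (v (k⁻¹ * h * k)) := by
  have e1 : k⁻¹ * g⁻¹ * k = (k⁻¹ * g * k)⁻¹ := by group
  have e2 : k⁻¹ * h⁻¹ * k = (k⁻¹ * h * k)⁻¹ := by group
  rw [br_eq_bracket, ← map_inv u, ← map_inv v, relv g⁻¹ h⁻¹ k, e1, e2,
    map_inv u, map_inv v, ← br_eq_bracket]

/-- expansion in the first argument -/
lemma coreC1 (g g' k : G) :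
    br (u (g * g')) (v k) = cj (br (u g) (v k)) (u g') * br (u g') (v k) := by
  rw [map_mul, brF1]

/-- expansion in the second argument -/
lemma coreC2 (g h h' : G) :
    br (u g) (v (h * h')) = br (u g) (v h') * cj (br (u g) (v h)) (v h') := by
  rw [map_mul, brF2]

lemma coreCinv (g k : G) :
    br (u g⁻¹) (v k) = (cj (br (u g) (v k)) (u g⁻¹))⁻¹ := by
  rw [map_inv, brF4]

include relu relv in
lemma coreI3 (g h k : G) :
    br (br (u g) (v h)) (u k) = br (u (br g h)) (v k) := by
  have hE1 : ∀ t ∈ TS u v, ∀ k : G, cj t (u k) = cj t (v k) :=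
    coreE1 u v (relu := relu) (relv := relv)
  have hE2 : ∀ t ∈ TS u v, ∀ g h : G, cj t (br (u g) (v h)) = cj t (u (br g h)) :=
    coreE2 u v (relu := relu) (relv := relv)
  set m : G := br k h⁻¹ with hm
  -- step e1
  have hbrgh : br g h = g⁻¹ * (h⁻¹ * g * h) := by simp only [br]; group
  have e1 : br (u (br g h)) (v k) =
      cj ((br (u g) (v k))⁻¹) (br (u g) (v h)) * br (u (h⁻¹ * g * h)) (v k) := by
    rw [show br (u (br g h)) (v k) = br (u (g⁻¹ * (h⁻¹ * g * h))) (v k) by rw [← hbrgh]]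
    rw [coreC1, coreCinv, cj_inv, cj_cj, ← map_mul]
    rw [show g⁻¹ * (h⁻¹ * g * h) = br g h from hbrgh.symm]
    rw [← cj_inv]
    rw [← hE2 _ (inv_mem (br_mem_TS u v g k)) g h]
  -- step e2
  have e2 : br (u (h⁻¹ * g * h)) (v k) =
      cj (br (u g) (v m)) (u h) * cj (br (u g) (v k)) (u (k⁻¹ * h * k)) := by
    have hk : k = h⁻¹ * (h * k * h⁻¹) * h := by group
    have hkm : h * k * h⁻¹ = k * m := by rw [hm]; simp only [br]; group
    calc br (u (h⁻¹ * g * h)) (v k)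
        = br (u (h⁻¹ * g * h)) (v (h⁻¹ * (h * k * h⁻¹) * h)) := by rw [← hk]
      _ = cj (br (u g) (v (h * k * h⁻¹))) (u h) := by
            rw [brel_u u v (relu := relu)]
      _ = cj (br (u g) (v (k * m))) (u h) := by rw [hkm]
      _ = cj (br (u g) (v m) * cj (br (u g) (v k)) (v m)) (u h) := by rw [coreC2]
      _ = cj (br (u g) (v m)) (u h) * cj (cj (br (u g) (v k)) (v m)) (u h) := by rw [cj_mul]
      _ = cj (br (u g) (v m)) (u h) * cj (cj (br (u g) (v k)) (u m)) (u h) := by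
            rw [hE1 _ (br_mem_TS u v g k) m]
      _ = cj (br (u g) (v m)) (u h) * cj (br (u g) (v k)) (u m * u h) := by rw [cj_cj]
      _ = cj (br (u g) (v m)) (u h) * cj (br (u g) (v k)) (u (k⁻¹ * h * k)) := by
            rw [← map_mul]
            congr 2
            rw [hm]; simp only [br]; group
  -- eX
  have eX : br (u g) (v h) * cj (br (u g) (v m)) (u h) = br (u g) (v (k⁻¹ * h * k)) := by
    rw [hE1 _ (br_mem_TS u v g m) h]
    rw [show (k⁻¹ * h * k : G) = m * h by rw [hm]; simp only [br]; group]
    rw [coreC2]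
  -- eY
  have eY : br (u g) (v (k⁻¹ * h * k)) * cj (br (u g) (v k)) (u (k⁻¹ * h * k)) =
      br (u g) (v k) * cj (br (u g) (v h)) (u k) := by
    rw [hE1 _ (br_mem_TS u v g k) (k⁻¹ * h * k)]
    rw [show br (u g) (v (k⁻¹ * h * k)) * cj (br (u g) (v k)) (v (k⁻¹ * h * k)) =
        br (u g) (v (k * (k⁻¹ * h * k))) from (coreC2 u v g k (k⁻¹ * h * k)).symm]
    rw [show (k * (k⁻¹ * h * k) : G) = h * k by group]
    rw [coreC2, hE1 _ (br_mem_TS u v g h) k]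
  -- assemble
  have key : br (u g) (v h) * br (u (br g h)) (v k) = cj (br (u g) (v h)) (u k) := by
    calc br (u g) (v h) * br (u (br g h)) (v k)
        = br (u g) (v h) * (cj ((br (u g) (v k))⁻¹) (br (u g) (v h)) *
            (cj (br (u g) (v m)) (u h) * cj (br (u g) (v k)) (u (k⁻¹ * h * k)))) := by
          rw [e1, e2]
      _ = (br (u g) (v k))⁻¹ * br (u g) (v h) *
            (cj (br (u g) (v m)) (u h) * cj (br (u g) (v k)) (u (k⁻¹ * h * k))) := by
          rw [← mul_assoc, mul_cj_inv]
      _ = (br (u g) (v k))⁻¹ * ((br (u g) (v h) * cj (br (u g) (v m)) (u h)) *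
            cj (br (u g) (v k)) (u (k⁻¹ * h * k))) := by group
      _ = (br (u g) (v k))⁻¹ * (br (u g) (v (k⁻¹ * h * k)) *
            cj (br (u g) (v k)) (u (k⁻¹ * h * k))) := by rw [eX]
      _ = (br (u g) (v k))⁻¹ * (br (u g) (v k) * cj (br (u g) (v h)) (u k)) := by rw [eY]
      _ = cj (br (u g) (v h)) (u k) := by group
  have hfin : br (u (br g h)) (v k) = (br (u g) (v h))⁻¹ * cj (br (u g) (v h)) (u k) := by
    rw [← key]; group
  rw [hfin, ← br_eq]

end Rels

end Core

/-! ### Instantiation in ν(G) -/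

section NuFacts

variable {G : Type*} [Group G]

local notation "l" => nuL G
local notation "r" => nuR G

lemma rel_l (g h k : G) :
    cj ⁅(l) g, (r) h⁆ ((l) k) = ⁅(l) (k⁻¹ * g * k), (r) (k⁻¹ * h * k)⁆ := by
  have hmem : ((Coprod.inl k)⁻¹ * ⁅(Coprod.inl g : Coprod G G), Coprod.inr h⁆ * Coprod.inl k) *
      (⁅(Coprod.inl (k⁻¹ * g * k) : Coprod G G), Coprod.inr (k⁻¹ * h * k)⁆)⁻¹ ∈
      Subgroup.normalClosure (nuRels G) :=
    Subgroup.subset_normalClosure ⟨g, h, k, Or.inl rfl⟩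
  have h1 := (QuotientGroup.eq_one_iff _).mpr hmem
  rw [QuotientGroup.mk_mul, QuotientGroup.mk_inv, mul_inv_eq_one] at h1
  exact h1

lemma rel_r (g h k : G) :
    cj ⁅(l) g, (r) h⁆ ((r) k) = ⁅(l) (k⁻¹ * g * k), (r) (k⁻¹ * h * k)⁆ := by
  have hmem : ((Coprod.inr k)⁻¹ * ⁅(Coprod.inl g : Coprod G G), Coprod.inr h⁆ * Coprod.inr k) *
      (⁅(Coprod.inl (k⁻¹ * g * k) : Coprod G G), Coprod.inr (k⁻¹ * h * k)⁆)⁻¹ ∈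
      Subgroup.normalClosure (nuRels G) :=
    Subgroup.subset_normalClosure ⟨g, h, k, Or.inr rfl⟩
  have h1 := (QuotientGroup.eq_one_iff _).mpr hmem
  rw [QuotientGroup.mk_mul, QuotientGroup.mk_inv, mul_inv_eq_one] at h1
  exact h1

/-- relations for the swapped pair (r, l) -/
lemma rel_rl_u (g h k : G) :
    cj ⁅(r) g, (l) h⁆ ((r) k) = ⁅(r) (k⁻¹ * g * k), (l) (k⁻¹ * h * k)⁆ := by
  rw [show ⁅(r) g, (l) h⁆ = (⁅(l) h, (r) g⁆)⁻¹ from (commutatorElement_inv _ _).symm,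
    cj_inv, rel_r h g k, commutatorElement_inv]

lemma rel_rl_v (g h k : G) :
    cj ⁅(r) g, (l) h⁆ ((l) k) = ⁅(r) (k⁻¹ * g * k), (l) (k⁻¹ * h * k)⁆ := by
  rw [show ⁅(r) g, (l) h⁆ = (⁅(l) h, (r) g⁆)⁻¹ from (commutatorElement_inv _ _).symm,
    cj_inv, rel_l h g k, commutatorElement_inv]

lemma nuE1 : ∀ t ∈ TS (l) (r), ∀ k : G, cj t ((l) k) = cj t ((r) k) :=
  coreE1 (l) (r) (relu := rel_l) (relv := rel_r)

lemma nuTconj : ∀ t ∈ TS (l) (r), ∀ k : G,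
    cj t ((l) k) ∈ TS (l) (r) ∧ cj t ((r) k) ∈ TS (l) (r) :=
  coreTconj (l) (r) (relu := rel_l) (relv := rel_r)

lemma nuI3 (g h k : G) :
    br (br ((l) g) ((r) h)) ((l) k) = br ((l) (br g h)) ((r) k) :=
  coreI3 (l) (r) (relu := rel_l) (relv := rel_r) g h k

lemma nuI3' (g h k : G) :
    br (br ((r) g) ((l) h)) ((r) k) = br ((r) (br g h)) ((l) k) :=
  coreI3 (r) (l) (relu := rel_rl_u) (relv := rel_rl_v) g h k

lemma range_sup : ((nuL G).range ⊔ (nuR G).range : Subgroup (Nu G)) = ⊤ := by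
  erw [MonoidHom.range_comp, MonoidHom.range_comp, ← Subgroup.map_sup,
    Coprod.range_inl_sup_range_inr, ← MonoidHom.range_eq_map,
    MonoidHom.range_eq_top]
  exact QuotientGroup.mk'_surjective _

lemma eq_top_of_lr (K : Subgroup (Nu G)) (hl : ∀ k : G, (l) k ∈ K)
    (hr : ∀ k : G, (r) k ∈ K) : K = ⊤ := by
  rw [← top_le_iff, ← range_sup]
  refine sup_le ?_ ?_
  · rintro x ⟨g, rfl⟩; exact hl g
  · rintro x ⟨g, rfl⟩; exact hr g

lemma normal_of_lr (H : Subgroup (Nu G)) (hl : ∀ k : G, ∀ x ∈ H, cj x ((l) k) ∈ H)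
    (hr : ∀ k : G, ∀ x ∈ H, cj x ((r) k) ∈ H) : H.Normal := by
  let K : Subgroup (Nu G) :=
    { carrier := { w : Nu G | ∀ x ∈ H, cj x w ∈ H ∧ cj x w⁻¹ ∈ H }
      one_mem' := by
        intro x hx
        simp only [cj, inv_one, one_mul, mul_one]
        exact ⟨hx, hx⟩
      mul_mem' := by
        intro a b ha hb x hx
        constructor
        · rw [← cj_cj]; exact (hb _ ((ha x hx).1)).1
        · rw [mul_inv_rev, ← cj_cj]; exact (ha _ ((hb x hx).2)).2
      inv_mem' := by
        intro a ha x hx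
        exact ⟨(ha x hx).2, by rw [inv_inv]; exact (ha x hx).1⟩ }
  have hK : K = ⊤ := by
    refine eq_top_of_lr K (fun k => ?_) (fun k => ?_)
    · exact fun x hx => ⟨hl k x hx, by rw [← map_inv]; exact hl k⁻¹ x hx⟩
    · exact fun x hx => ⟨hr k x hx, by rw [← map_inv]; exact hr k⁻¹ x hx⟩
  constructor
  intro n hn g
  have hg : g⁻¹ ∈ K := hK ▸ Subgroup.mem_top _
  have := (hg n hn).1
  simpa [cj] using this

lemma T_normal : (TS (nuL G) (nuR G)).Normal := by
  refine normal_of_lr _ (fun k x hx => (nuTconj x hx k).1) (fun k x hx => (nuTconj x hx k).2)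

/-- the retraction ρ : ν(G) → G, l ↦ id, r ↦ id -/
def rho : Nu G →* G :=
  QuotientGroup.lift _ (Coprod.lift (MonoidHom.id G) (MonoidHom.id G)) (by
    refine Subgroup.normalClosure_le_normal ?_
    rintro x ⟨g, h, k, (rfl | rfl)⟩ <;>
    · show _ ∈ MonoidHom.ker _
      rw [MonoidHom.mem_ker]
      simp only [map_mul, map_inv, map_commutatorElement, Coprod.lift_apply_inl,
        Coprod.lift_apply_inr, MonoidHom.id_apply, commutatorElement_def]
      group)

lemma rho_l (g : G) : rho ((l) g) = g := rfl

lemma rho_r (g : G) : rho ((r) g) = g := rfl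

/-- E3: conjugation of T-elements by any w equals conjugation by `l (ρ w)` -/
lemma nuE3 : ∀ t ∈ TS (nuL G) (nuR G), ∀ w : Nu G, cj t w = cj t ((l) (rho w)) := by
  have hTn := (T_normal (G := G))
  let K : Subgroup (Nu G) :=
    { carrier := { w : Nu G | ∀ t ∈ TS (nuL G) (nuR G), cj t w = cj t ((l) (rho w)) }
      one_mem' := by intro t ht; simp [cj]
      mul_mem' := by
        intro a b ha hb t ht
        have h1 : cj t ((l) (rho a)) ∈ TS (nuL G) (nuR G) := (nuTconj t ht _).1
        rw [← cj_cj, ha t ht, hb _ h1, cj_cj, ← map_mul (nuL G), ← map_mul rho]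
      inv_mem' := by
        intro a ha t ht
        have h1 : cj t a⁻¹ ∈ TS (nuL G) (nuR G) := cj_mem_of_normal hTn ht a⁻¹
        have h2 := ha _ h1
        rw [cj_cj, inv_mul_cancel, cj_one_right] at h2
        -- h2 : t = cj (cj t a⁻¹) (l (rho a))
        have h4 : cj t ((l) (rho a))⁻¹ = cj t a⁻¹ := by
          conv_lhs => rw [h2]
          rw [cj_cj, mul_inv_cancel, cj_one_right]
        rw [map_inv (rho (G := G)), map_inv (nuL G), h4] }
  have hK : K = ⊤ := by
    refine eq_top_of_lr K (fun k => ?_) (fun k => ?_)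
    · intro t ht; rw [rho_l]
    · intro t ht; rw [rho_r]; exact (nuE1 t ht k).symm
  intro t ht w
  exact (hK ▸ Subgroup.mem_top w : w ∈ K) t ht

/-- I3 upgraded to all elements of T -/
lemma nuI3star : ∀ t ∈ TS (nuL G) (nuR G), ∀ k : G,
    br t ((l) k) = br ((l) (rho t)) ((r) k) := by
  let K : Subgroup (Nu G) :=
    { carrier := { t : Nu G | ∀ k : G, br t ((l) k) = br ((l) (rho t)) ((r) k) }
      one_mem' := by intro k; simp [br_one_left, map_one]
      mul_mem' := by
        intro a b ha hb k
        have hmem : br ((l) (rho a)) ((r) k) ∈ TS (nuL G) (nuR G) := br_mem_TS _ _ _ _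
        rw [brF1, ha k, hb k, nuE3 _ hmem b, map_mul (rho (G := G)), map_mul (nuL G), brF1]
      inv_mem' := by
        intro a ha k
        have hmem : br ((l) (rho a)) ((r) k) ∈ TS (nuL G) (nuR G) := br_mem_TS _ _ _ _
        rw [brF4, ha k, nuE3 _ hmem a⁻¹, map_inv (rho (G := G)), map_inv (nuL G), ← brF4] }
  have hle : TS (nuL G) (nuR G) ≤ K := by
    rw [TS]
    refine commutator_le.mpr ?_
    rintro x ⟨g, rfl⟩ y ⟨h, rfl⟩
    intro k
    rw [bracket_eq_br, ← map_inv (l), ← map_inv (r), nuI3 g⁻¹ h⁻¹ k,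
      show rho (br ((l) g⁻¹) ((r) h⁻¹)) = br g⁻¹ h⁻¹ by
        simp only [br, map_mul, map_inv, rho_l, rho_r]]
  exact fun t ht k => hle ht k

lemma br_T_r_eq_l : ∀ t ∈ TS (nuL G) (nuR G), ∀ k : G, br t ((r) k) = br t ((l) k) := by
  intro t ht k
  rw [br_eq, br_eq, nuE1 t ht k]

lemma br_T_T : ∀ t ∈ TS (nuL G) (nuR G), ∀ d : Nu G, br t d = br t ((l) (rho d)) := by
  intro t ht d
  rw [br_eq, br_eq, nuE3 t ht d]

end NuFacts

/-! ### Subgroup-level lemmas -/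

section Subgroups

variable {G : Type*} [Group G]

local notation "l" => nuL G
local notation "r" => nuR G

/-- the subgroup `[M, Nφ]` of ν(G) -/
def TT (M N : Subgroup G) : Subgroup (Nu G) := ⁅M.map (nuL G), N.map (nuR G)⁆

lemma TT_le_TS (M N : Subgroup G) : TT M N ≤ TS (nuL G) (nuR G) :=
  commutator_mono (Subgroup.map_le_range _ _) (Subgroup.map_le_range _ _)

lemma conj_mem'' {M : Subgroup G} (hM : M.Normal) {m : G} (hm : m ∈ M) (k : G) :
    k⁻¹ * m * k ∈ M := by simpa using hM.conj_mem m hm k⁻¹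

lemma rho_TT (M N : Subgroup G) : ∀ t ∈ TT M N, rho t ∈ ⁅M, N⁆ := by
  intro t ht
  have h1 : rho t ∈ (TT M N).map (rho (G := G)) := Subgroup.mem_map_of_mem _ ht
  rw [TT, Subgroup.map_commutator, Subgroup.map_map, Subgroup.map_map] at h1
  have e1 : (rho (G := G)).comp (nuL G) = MonoidHom.id G := by
    ext x; exact rho_l x
  have e2 : (rho (G := G)).comp (nuR G) = MonoidHom.id G := by
    ext x; exact rho_r x
  rwa [e1, e2, Subgroup.map_id, Subgroup.map_id] at h1

lemma TT_conj (M N : Subgroup G) (hM : M.Normal) (hN : N.Normal) :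
    ∀ t ∈ TT M N, ∀ k : G, cj t ((l) k) ∈ TT M N ∧ cj t ((r) k) ∈ TT M N := by
  have hgen : Subgroup.closure
      {x : Nu G | ∃ p ∈ M.map (nuL G), ∃ q ∈ N.map (nuR G), ⁅p, q⁆ = x} = TT M N :=
    (Subgroup.commutator_def _ _).symm
  intro t ht k
  constructor
  · have h0 : ∀ s ∈ {x : Nu G | ∃ p ∈ M.map (nuL G), ∃ q ∈ N.map (nuR G), ⁅p, q⁆ = x},
        (cjHom ((l) k)) s ∈ TT M N := by
      rintro s ⟨p, ⟨m, hm, rfl⟩, q, ⟨n, hn, rfl⟩, rfl⟩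
      rw [cjHom_apply, rel_l]
      exact commutator_mem_commutator
        (Subgroup.mem_map_of_mem _ (conj_mem'' hM hm k))
        (Subgroup.mem_map_of_mem _ (conj_mem'' hN hn k))
    have := map_self_of_gen hgen (cjHom ((l) k)) h0 t ht
    rwa [cjHom_apply] at this
  · have h0 : ∀ s ∈ {x : Nu G | ∃ p ∈ M.map (nuL G), ∃ q ∈ N.map (nuR G), ⁅p, q⁆ = x},
        (cjHom ((r) k)) s ∈ TT M N := by
      rintro s ⟨p, ⟨m, hm, rfl⟩, q, ⟨n, hn, rfl⟩, rfl⟩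
      rw [cjHom_apply, rel_r]
      exact commutator_mem_commutator
        (Subgroup.mem_map_of_mem _ (conj_mem'' hM hm k))
        (Subgroup.mem_map_of_mem _ (conj_mem'' hN hn k))
    have := map_self_of_gen hgen (cjHom ((r) k)) h0 t ht
    rwa [cjHom_apply] at this

lemma TT_normal (M N : Subgroup G) (hM : M.Normal) (hN : N.Normal) : (TT M N).Normal :=
  normal_of_lr _ (fun k x hx => (TT_conj M N hM hN x hx k).1)
    (fun k x hx => (TT_conj M N hM hN x hx k).2)

lemma lemA (P : Subgroup G) (hP : P.Normal) :
    ∀ a ∈ ⁅P, P⁆, ∀ k : G, br ((l) a) ((r) k) ∈ TT P P := by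
  have hTTn : (TT P P).Normal := TT_normal P P hP hP
  let K : Subgroup G :=
    { carrier := { a : G | ∀ k : G, br ((l) a) ((r) k) ∈ TT P P }
      one_mem' := by intro k; rw [map_one, br_one_left]; exact Subgroup.one_mem _
      mul_mem' := by
        intro a b ha hb k
        rw [map_mul, brF1]
        exact mul_mem (cj_mem_of_normal hTTn (ha k) _) (hb k)
      inv_mem' := by
        intro a ha k
        rw [map_inv, brF4]
        exact inv_mem (cj_mem_of_normal hTTn (ha k) _) }
  have hle : ⁅P, P⁆ ≤ K := by
    refine commutator_le.mpr ?_
    intro x hx y hy k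
    have hxy : (⁅x, y⁆ : G) = br x⁻¹ y⁻¹ := bracket_eq_br x y
    rw [hxy, ← nuI3 x⁻¹ y⁻¹ k]
    have ht : br ((l) x⁻¹) ((r) y⁻¹) ∈ TT P P :=
      br_mem_commutator (Subgroup.mem_map_of_mem _ (inv_mem hx))
        (Subgroup.mem_map_of_mem _ (inv_mem hy))
    rw [br_eq]
    exact mul_mem (inv_mem ht) (cj_mem_of_normal hTTn ht _)
  exact fun a ha k => hle ha k

lemma lemB (P : Subgroup G) (hP : P.Normal) :
    ∀ b ∈ ⁅P, P⁆, ∀ k : G, br ((l) k) ((r) b) ∈ TT P P := by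
  have hTTn : (TT P P).Normal := TT_normal P P hP hP
  let K : Subgroup G :=
    { carrier := { b : G | ∀ k : G, br ((l) k) ((r) b) ∈ TT P P }
      one_mem' := by intro k; rw [map_one, br_one_right]; exact Subgroup.one_mem _
      mul_mem' := by
        intro a b ha hb k
        rw [map_mul, brF2]
        exact mul_mem (hb k) (cj_mem_of_normal hTTn (ha k) _)
      inv_mem' := by
        intro a ha k
        rw [map_inv, brF3]
        exact inv_mem (cj_mem_of_normal hTTn (ha k) _) }
  have hle : ⁅P, P⁆ ≤ K := by
    refine commutator_le.mpr ?_
    intro x hx y hy k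
    have hxy : (⁅x, y⁆ : G) = br x⁻¹ y⁻¹ := bracket_eq_br x y
    rw [hxy, br_rev ((l) k), ← nuI3' x⁻¹ y⁻¹ k]
    have ht : br ((r) x⁻¹) ((l) y⁻¹) ∈ TT P P := by
      rw [br_rev]
      exact inv_mem (br_mem_commutator (Subgroup.mem_map_of_mem _ (inv_mem hy))
        (Subgroup.mem_map_of_mem _ (inv_mem hx)))
    rw [br_eq]
    exact inv_mem (mul_mem (inv_mem ht) (cj_mem_of_normal hTTn ht _))
  exact fun b hb k => hle hb k

lemma W_normal (P : Subgroup G) (hP : P.Normal) :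
    ((⁅P, P⁆.map (nuL G) ⊔ ⁅P, P⁆.map (nuR G)) ⊔ TT P P).Normal := by
  set A := ⁅P, P⁆.map (nuL G) with hA
  set B := ⁅P, P⁆.map (nuR G) with hB
  set C := TT P P with hC
  have hPPn : (⁅P, P⁆ : Subgroup G).Normal := by
    haveI := hP; infer_instance
  have hAW : A ≤ A ⊔ B ⊔ C := le_sup_left.trans le_sup_left
  have hBW : B ≤ A ⊔ B ⊔ C := le_sup_right.trans le_sup_left
  have hCW : C ≤ A ⊔ B ⊔ C := le_sup_right
  have hgen : Subgroup.closure ((A : Set (Nu G)) ∪ (B : Set (Nu G)) ∪ (C : Set (Nu G)))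
      = A ⊔ B ⊔ C := by
    rw [Subgroup.closure_union, Subgroup.closure_union, Subgroup.closure_eq,
      Subgroup.closure_eq, Subgroup.closure_eq]
  refine normal_of_lr _ (fun k x hx => ?_) (fun k x hx => ?_)
  · have h0 : ∀ s ∈ (A : Set (Nu G)) ∪ (B : Set (Nu G)) ∪ (C : Set (Nu G)),
        (cjHom ((l) k)) s ∈ A ⊔ B ⊔ C := ?_
    · have := map_self_of_gen hgen (cjHom ((l) k)) h0 x hx
      rwa [cjHom_apply] at this
    rintro s ((hs | hs) | hs)
    all_goals rw [cjHom_apply]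
    · obtain ⟨a, ha, rfl⟩ := hs
      rw [show cj ((l) a) ((l) k) = (l) (k⁻¹ * a * k) by
        simp only [cj, map_mul, map_inv]]
      exact hAW (Subgroup.mem_map_of_mem _ (conj_mem'' hPPn ha k))
    · obtain ⟨b, hb, rfl⟩ := hs
      rw [cj_eq_mul_br]
      refine mul_mem (hBW (Subgroup.mem_map_of_mem _ hb)) ?_
      rw [br_rev]
      exact hCW (inv_mem (lemB P hP b hb k))
    · exact hCW (TT_conj P P hP hP s hs k).1
  · have h0 : ∀ s ∈ (A : Set (Nu G)) ∪ (B : Set (Nu G)) ∪ (C : Set (Nu G)),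
        (cjHom ((r) k)) s ∈ A ⊔ B ⊔ C := ?_
    · have := map_self_of_gen hgen (cjHom ((r) k)) h0 x hx
      rwa [cjHom_apply] at this
    rintro s ((hs | hs) | hs)
    all_goals rw [cjHom_apply]
    · obtain ⟨a, ha, rfl⟩ := hs
      rw [cj_eq_mul_br]
      exact mul_mem (hAW (Subgroup.mem_map_of_mem _ ha)) (hCW (lemA P hP a ha k))
    · obtain ⟨b, hb, rfl⟩ := hs
      rw [show cj ((r) b) ((r) k) = (r) (k⁻¹ * b * k) by
        simp only [cj, map_mul, map_inv]]
      exact hBW (Subgroup.mem_map_of_mem _ (conj_mem'' hPPn hb k))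
    · exact hCW (TT_conj P P hP hP s hs k).2

lemma main_step (P Q : Subgroup G) (hP : P.Normal) (hQ : Q.Normal)
    (hQP : (⁅Q, Q⁆ : Subgroup G) ≤ P) :
    ⁅P.map (nuL G) ⊔ P.map (nuR G) ⊔ TT Q Q, P.map (nuL G) ⊔ P.map (nuR G) ⊔ TT Q Q⁆ =
      ⁅P, P⁆.map (nuL G) ⊔ ⁅P, P⁆.map (nuR G) ⊔ TT P P := by
  set W : Subgroup (Nu G) := ⁅P, P⁆.map (nuL G) ⊔ ⁅P, P⁆.map (nuR G) ⊔ TT P P with hW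
  set X : Subgroup (Nu G) := P.map (nuL G) ⊔ P.map (nuR G) ⊔ TT Q Q with hX
  haveI hWn : W.Normal := W_normal P hP
  have hAW : ⁅P, P⁆.map (nuL G) ≤ W := le_sup_left.trans le_sup_left
  have hBW : ⁅P, P⁆.map (nuR G) ≤ W := le_sup_right.trans le_sup_left
  have hCW : TT P P ≤ W := le_sup_right
  have hQT : TT Q Q ≤ TS (nuL G) (nuR G) := TT_le_TS Q Q
  -- the nine pairwise commutator facts
  have hab : ∀ a ∈ P, ∀ b ∈ P, ⁅(l) a, (r) b⁆ ∈ W := fun a ha b hb =>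
    hCW (commutator_mem_commutator (Subgroup.mem_map_of_mem _ ha)
      (Subgroup.mem_map_of_mem _ hb))
  have haa : ∀ a ∈ P, ∀ b ∈ P, ⁅(l) a, (l) b⁆ ∈ W := by
    intro a ha b hb
    rw [← map_commutatorElement]
    exact hAW (Subgroup.mem_map_of_mem _ (commutator_mem_commutator ha hb))
  have hbb : ∀ a ∈ P, ∀ b ∈ P, ⁅(r) a, (r) b⁆ ∈ W := by
    intro a ha b hb
    rw [← map_commutatorElement]
    exact hBW (Subgroup.mem_map_of_mem _ (commutator_mem_commutator ha hb))
  have hba : ∀ a ∈ P, ∀ b ∈ P, ⁅(r) b, (l) a⁆ ∈ W := by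
    intro a ha b hb
    rw [show (⁅(r) b, (l) a⁆ : Nu G) = (⁅(l) a, (r) b⁆)⁻¹ from
      (commutatorElement_inv _ _).symm]
    exact inv_mem (hab a ha b hb)
  have hta : ∀ t ∈ TT Q Q, ∀ a ∈ P, ⁅t, (l) a⁆ ∈ W := by
    intro t ht a ha
    rw [bracket_eq_br, ← map_inv, nuI3star t⁻¹ (inv_mem (hQT ht)) a⁻¹]
    refine hCW (br_mem_commutator (Subgroup.mem_map_of_mem _ ?_)
      (Subgroup.mem_map_of_mem _ (inv_mem ha)))
    exact hQP (rho_TT Q Q _ (inv_mem ht))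
  have hat : ∀ t ∈ TT Q Q, ∀ a ∈ P, ⁅(l) a, t⁆ ∈ W := by
    intro t ht a ha
    rw [show (⁅(l) a, t⁆ : Nu G) = (⁅t, (l) a⁆)⁻¹ from (commutatorElement_inv _ _).symm]
    exact inv_mem (hta t ht a ha)
  have htb : ∀ t ∈ TT Q Q, ∀ b ∈ P, ⁅t, (r) b⁆ ∈ W := by
    intro t ht b hb
    rw [bracket_eq_br, ← map_inv, br_T_r_eq_l t⁻¹ (inv_mem (hQT ht)) b⁻¹,
      nuI3star t⁻¹ (inv_mem (hQT ht)) b⁻¹]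
    refine hCW (br_mem_commutator (Subgroup.mem_map_of_mem _ ?_)
      (Subgroup.mem_map_of_mem _ (inv_mem hb)))
    exact hQP (rho_TT Q Q _ (inv_mem ht))
  have hbt : ∀ t ∈ TT Q Q, ∀ b ∈ P, ⁅(r) b, t⁆ ∈ W := by
    intro t ht b hb
    rw [show (⁅(r) b, t⁆ : Nu G) = (⁅t, (r) b⁆)⁻¹ from (commutatorElement_inv _ _).symm]
    exact inv_mem (htb t ht b hb)
  have htt : ∀ t ∈ TT Q Q, ∀ t' ∈ TT Q Q, ⁅t, t'⁆ ∈ W := by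
    intro t ht t' ht'
    rw [bracket_eq_br, br_T_T t⁻¹ (inv_mem (hQT ht)) t'⁻¹,
      nuI3star t⁻¹ (inv_mem (hQT ht)) (rho t'⁻¹)]
    refine hCW (br_mem_commutator (Subgroup.mem_map_of_mem _ ?_)
      (Subgroup.mem_map_of_mem _ ?_))
    · exact hQP (rho_TT Q Q _ (inv_mem ht))
    · exact hQP (rho_TT Q Q _ (inv_mem ht'))
  refine le_antisymm ?_ ?_
  · -- quotient/centralizer argument
    refine commutator_le.mpr ?_
    set π := QuotientGroup.mk' W with hπ
    have hcomm : ∀ x y : Nu G, ⁅x, y⁆ ∈ W → π y * π x = π x * π y := by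
      intro x y hxy
      have h1 : π ⁅x, y⁆ = 1 := (QuotientGroup.eq_one_iff _).mpr hxy
      rw [map_commutatorElement] at h1
      exact (commutatorElement_eq_one_iff_mul_comm.mp h1).symm
    have leaf : ∀ (A B : Subgroup (Nu G)), (∀ a ∈ A, ∀ b ∈ B, ⁅a, b⁆ ∈ W) →
        A.map π ≤ Subgroup.centralizer (B.map π) := by
      intro A B hAB
      rintro x ⟨x₀, hx₀, rfl⟩
      rw [Subgroup.mem_centralizer_iff]
      rintro y ⟨y₀, hy₀, rfl⟩
      exact hcomm x₀ y₀ (hAB x₀ hx₀ y₀ hy₀)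
    have hcent : X.map π ≤ Subgroup.centralizer (X.map π) := by
      rw [hX, Subgroup.map_sup, Subgroup.map_sup]
      refine sup_le (sup_le ?_ ?_) ?_ <;> rw [Subgroup.le_centralizer_iff]
      · refine sup_le (sup_le ?_ ?_) ?_
        · exact leaf _ _ (fun x hx y hy => by
            obtain ⟨a, ha, rfl⟩ := hx; obtain ⟨b, hb, rfl⟩ := hy
            exact haa a ha b hb)
        · exact leaf _ _ (fun x hx y hy => by
            obtain ⟨a, ha, rfl⟩ := hx; obtain ⟨b, hb, rfl⟩ := hy
            exact hba b hb a ha)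
        · exact leaf _ _ (fun x hx y hy => by
            obtain ⟨b, hb, rfl⟩ := hy
            exact hta x hx b hb)
      · refine sup_le (sup_le ?_ ?_) ?_
        · exact leaf _ _ (fun x hx y hy => by
            obtain ⟨a, ha, rfl⟩ := hx; obtain ⟨b, hb, rfl⟩ := hy
            exact hab a ha b hb)
        · exact leaf _ _ (fun x hx y hy => by
            obtain ⟨a, ha, rfl⟩ := hx; obtain ⟨b, hb, rfl⟩ := hy
            exact hbb a ha b hb)
        · exact leaf _ _ (fun x hx y hy => by
            obtain ⟨b, hb, rfl⟩ := hy
            exact htb x hx b hb)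
      · refine sup_le (sup_le ?_ ?_) ?_
        · exact leaf _ _ (fun x hx y hy => by
            obtain ⟨a, ha, rfl⟩ := hx
            exact hat y hy a ha)
        · exact leaf _ _ (fun x hx y hy => by
            obtain ⟨a, ha, rfl⟩ := hx
            exact hbt y hy a ha)
        · exact leaf _ _ (fun x hx y hy => htt x hx y hy)
    intro x hx y hy
    have h1 : π x ∈ X.map π := Subgroup.mem_map_of_mem _ hx
    have h2 : π y ∈ X.map π := Subgroup.mem_map_of_mem _ hy
    have h3 := Subgroup.mem_centralizer_iff.mp (hcent h1) (π y) h2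
    have h4 : π ⁅x, y⁆ = 1 := by
      rw [map_commutatorElement]
      exact commutatorElement_eq_one_iff_mul_comm.mpr h3.symm
    exact (QuotientGroup.eq_one_iff _).mp h4
  · -- easy inclusion
    have hXl : P.map (nuL G) ≤ X := le_sup_left.trans le_sup_left
    have hXr : P.map (nuR G) ≤ X := le_sup_right.trans le_sup_left
    refine sup_le (sup_le ?_ ?_) ?_
    · rw [Subgroup.map_commutator]
      exact commutator_mono hXl hXl
    · rw [Subgroup.map_commutator]
      exact commutator_mono hXr hXr
    · exact commutator_mono hXl hXr

end Subgroups

section Main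

variable (G : Type*) [Group G]

lemma nu_main : ∀ n : ℕ, derivedSeries (Nu G) (n + 1) =
    (⁅derivedSeries G n, derivedSeries G n⁆ : Subgroup G).map (nuL G) ⊔
    (⁅derivedSeries G n, derivedSeries G n⁆ : Subgroup G).map (nuR G) ⊔
    ⁅(derivedSeries G n).map (nuL G), (derivedSeries G n).map (nuR G)⁆ := by
  intro n
  induction n with
  | zero =>
    have h0 : derivedSeries (Nu G) 1 = ⁅(⊤ : Subgroup (Nu G)), ⊤⁆ := by
      rw [derivedSeries_succ, derivedSeries_zero]
    have hX : ((⊤ : Subgroup G).map (nuL G) ⊔ (⊤ : Subgroup G).map (nuR G) ⊔ TT ⊤ ⊤)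
        = (⊤ : Subgroup (Nu G)) := by
      rw [← MonoidHom.range_eq_map (nuL G), ← MonoidHom.range_eq_map (nuR G),
        eq_top_iff, ← range_sup]
      exact le_sup_left
    rw [derivedSeries_zero, h0, ← hX]
    exact main_step ⊤ ⊤ (by infer_instance) (by infer_instance) le_top
  | succ n ih =>
    haveI hdn : (derivedSeries G n).Normal := derivedSeries_normal G n
    haveI hdn1 : (⁅derivedSeries G n, derivedSeries G n⁆ : Subgroup G).Normal := by
      infer_instance
    rw [derivedSeries_succ (Nu G) (n + 1), ih, derivedSeries_succ G n]
    exact main_step ⁅derivedSeries G n, derivedSeries G n⁆ (derivedSeries G n)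
      hdn1 hdn le_rfl

end Main

end NuProof

open NuProof in
/-- For i ≥ 2 (here i = j + 2): ν(G)^(i) = G^(i)·(Gφ)^(i)·[G^(i-1),(Gφ)^(i-1)];
in particular ν(G)' = [G,Gφ]·G'·(G')φ. -/
theorem nu_derived_series (G : Type*) [Group G] :
    (∀ j : ℕ,
      derivedSeries (Nu G) (j + 2) =
        (derivedSeries G (j + 2)).map (nuL G) ⊔ (derivedSeries G (j + 2)).map (nuR G) ⊔
          ⁅(derivedSeries G (j + 1)).map (nuL G), (derivedSeries G (j + 1)).map (nuR G)⁆) ∧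
    derivedSeries (Nu G) 1 =
      ⁅(nuL G).range, (nuR G).range⁆ ⊔ (commutator G).map (nuL G) ⊔
        (commutator G).map (nuR G) := by
  constructor
  · intro j
    have h := nu_main G (j + 1)
    rw [derivedSeries_succ G (j + 1)]
    exact h
  · have h := nu_main G 0
    rw [derivedSeries_zero] at h
    rw [h, commutator_def, ← MonoidHom.range_eq_map (nuL G), ← MonoidHom.range_eq_map (nuR G)]
    rw [sup_comm, ← sup_assoc]
end

section
/- Let G be a finitely generated group whose non-abelian tensor square [G,Gφ] (inside ν(G)) is finite. Then G is finite. -/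
open Monoid Subgroup
open scoped commutatorElement

namespace NPaux

/-- The discrete Heisenberg group, as triples of integers. -/
@[ext]
structure Heis where
  a : ℤ
  b : ℤ
  c : ℤ

namespace Heis
instance : Mul Heis := ⟨fun x y => ⟨x.a + y.a, x.b + y.b, x.c + y.c + x.a * y.b⟩⟩
instance : One Heis := ⟨⟨0, 0, 0⟩⟩
instance : Inv Heis := ⟨fun x => ⟨-x.a, -x.b, -x.c + x.a * x.b⟩⟩
@[simp] lemma mul_a (x y : Heis) : (x * y).a = x.a + y.a := rfl
@[simp] lemma mul_b (x y : Heis) : (x * y).b = x.b + y.b := rfl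
@[simp] lemma mul_c (x y : Heis) : (x * y).c = x.c + y.c + x.a * y.b := rfl
@[simp] lemma one_a : (1 : Heis).a = 0 := rfl
@[simp] lemma one_b : (1 : Heis).b = 0 := rfl
@[simp] lemma one_c : (1 : Heis).c = 0 := rfl
@[simp] lemma inv_a (x : Heis) : x⁻¹.a = -x.a := rfl
@[simp] lemma inv_b (x : Heis) : x⁻¹.b = -x.b := rfl
@[simp] lemma inv_c (x : Heis) : x⁻¹.c = -x.c + x.a * x.b := rfl
instance : Group Heis where
  mul_assoc x y z := by ext <;> simp <;> ring
  one_mul x := by ext <;> simp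
  mul_one x := by ext <;> simp
  inv_mul_cancel x := by ext <;> simp

lemma pow_central (n : ℕ) : (⟨0, 0, 1⟩ : Heis) ^ n = ⟨0, 0, (n : ℤ)⟩ := by
  induction n with
  | zero => ext <;> simp
  | succ n ih => rw [pow_succ, ih]; ext <;> simp
end Heis

/-- The homomorphism ν(G) → G collapsing the two copies of G. -/
def kappa (G : Type*) [Group G] : Nu G →* G :=
  QuotientGroup.lift _ (Coprod.lift (MonoidHom.id G) (MonoidHom.id G)) (by
    intro x hx
    refine Subgroup.normalClosure_le_normal ?_ hx
    rintro r ⟨g, h, k, (rfl | rfl)⟩ <;>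
    · simp only [MonoidHom.mem_ker, SetLike.mem_coe, map_mul, map_inv,
        map_commutatorElement, Coprod.lift_apply_inl, Coprod.lift_apply_inr,
        MonoidHom.id_apply, commutatorElement_def]
      group)

@[simp] lemma kappa_nuL (G : Type*) [Group G] (g : G) : kappa G (nuL G g) = g := rfl
@[simp] lemma kappa_nuR (G : Type*) [Group G] (g : G) : kappa G (nuR G g) = g := rfl

section Key
variable {G : Type*} [Group G] (F : G → ℤ) (hF : ∀ x y : G, F (x * y) = F x + F y)
include hF

lemma F_one : F 1 = 0 := by have := hF 1 1; simpa using this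

lemma F_inv (x : G) : F x⁻¹ = -F x := by
  have h := hF x⁻¹ x; rw [inv_mul_cancel, F_one F hF] at h; omega

lemma F_conj (k x : G) : F (k⁻¹ * x * k) = F x := by
  rw [hF, hF, F_inv F hF]; ring

/-- homomorphism into the Heisenberg group, first coordinate. -/
def homL : G →* Heis where
  toFun g := ⟨F g, 0, 0⟩
  map_one' := by ext <;> simp [F_one F hF]
  map_mul' x y := by ext <;> simp [hF]

/-- homomorphism into the Heisenberg group, second coordinate. -/
def homR : G →* Heis where
  toFun g := ⟨0, F g, 0⟩
  map_one' := by ext <;> simp [F_one F hF]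
  map_mul' x y := by ext <;> simp [hF]

/-- The induced homomorphism ν(G) → Heis. -/
def lam : Nu G →* Heis :=
  QuotientGroup.lift _ (Coprod.lift (homL F hF) (homR F hF)) (by
    intro x hx
    refine Subgroup.normalClosure_le_normal ?_ hx
    rintro r ⟨g, h, k, (rfl | rfl)⟩ <;>
    · simp only [MonoidHom.mem_ker, SetLike.mem_coe, map_mul, map_inv,
        map_commutatorElement, Coprod.lift_apply_inl, Coprod.lift_apply_inr,
        commutatorElement_def, homL, homR, MonoidHom.coe_mk, OneHom.coe_mk,
        F_conj F hF]
      ext <;> simp <;> ring)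

theorem key (g₀ : G) (hg₀ : F g₀ = 1)
    (hfin : Finite (⁅(nuL G).range, (nuR G).range⁆ : Subgroup (Nu G))) : False := by
  set H : Subgroup (Nu G) := ⁅(nuL G).range, (nuR G).range⁆ with hH
  set z : Nu G := ⁅nuL G g₀, nuR G g₀⁆ with hz
  have hzH : z ∈ H := Subgroup.commutator_mem_commutator ⟨g₀, rfl⟩ ⟨g₀, rfl⟩
  have hlamz : lam F hF z = ⟨0, 0, 1⟩ := by
    have h1 : lam F hF (nuL G g₀) = ⟨1, 0, 0⟩ := by
      show Coprod.lift (homL F hF) (homR F hF) (Coprod.inl g₀) = _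
      simp [Coprod.lift_apply_inl, homL, hg₀]
    have h2 : lam F hF (nuR G g₀) = ⟨0, 1, 0⟩ := by
      show Coprod.lift (homL F hF) (homR F hF) (Coprod.inr g₀) = _
      simp [Coprod.lift_apply_inr, homR, hg₀]
    rw [hz, map_commutatorElement, h1, h2, commutatorElement_def]
    ext <;> simp
  obtain ⟨m, n, hmn, he⟩ := Finite.exists_ne_map_eq_of_infinite
    (fun n : ℕ => (⟨z ^ n, pow_mem hzH n⟩ : H))
  apply hmn
  have : (m : ℤ) = (n : ℤ) := by
    have := congrArg (fun x : H => (lam F hF (x : Nu G)).c) he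
    simpa [map_pow, hlamz, Heis.pow_central] using this
  exact_mod_cast this

end Key
end NPaux

/-- Niroomand–Parvizi: a finitely generated group with finite non-abelian tensor
square [G,Gφ] is finite. -/
theorem fg_finite_tensor_square (G : Type*) [Group G] (hfg : Group.FG G)
    (hfin : Finite (⁅(nuL G).range, (nuR G).range⁆ : Subgroup (Nu G))) :
    Finite G := by
  -- Step 1: the commutator subgroup of G is finite.
  have hmap : Subgroup.map (NPaux.kappa G) ⁅(nuL G).range, (nuR G).range⁆ = commutator G := by
    rw [Subgroup.map_commutator, MonoidHom.map_range, MonoidHom.map_range]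
    have h1 : (NPaux.kappa G).comp (nuL G) = MonoidHom.id G := by ext g; simp
    have h2 : (NPaux.kappa G).comp (nuR G) = MonoidHom.id G := by ext g; simp
    rw [h1, h2, commutator_def]
    congr 1 <;> exact MonoidHom.range_eq_top_of_surjective _ (fun g => ⟨g, rfl⟩)
  have hcommfin : Finite (commutator G) := by
    rw [← hmap]
    have hset : ((⁅(nuL G).range, (nuR G).range⁆ : Subgroup (Nu G)) : Set (Nu G)).Finite :=
      Set.toFinite _
    have : ((Subgroup.map (NPaux.kappa G) ⁅(nuL G).range, (nuR G).range⁆ : Subgroup G) :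
        Set G).Finite := by
      rw [Subgroup.coe_map]
      exact hset.image _
    exact this.to_subtype
  -- Step 2: the abelianization of G is finite.
  have habfin : Finite (Abelianization G) := by
    by_contra habfin
    have hsurj : Function.Surjective (Abelianization.of (G := G)) :=
      fun y => Quotient.inductionOn' y fun a => ⟨a, rfl⟩
    haveI : Group.FG (Abelianization G) := Group.fg_of_surjective hsurj
    haveI : AddGroup.FG (Additive (Abelianization G)) := inferInstance
    obtain ⟨n, ι, fι, p, hp, e, ⟨eqv⟩⟩ :=
      AddCommGroup.equiv_free_prod_directSum_zmod (Additive (Abelianization G))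
    haveI : ∀ i, Finite (ZMod (p i ^ e i)) := fun i => by
      haveI : NeZero (p i ^ e i) := ⟨pow_ne_zero _ (hp i).ne_zero⟩
      infer_instance
    haveI : Finite (DirectSum ι fun i => ZMod (p i ^ e i)) := by
      have hinj : Function.Injective
          (DFunLike.coe : (DirectSum ι fun i => ZMod (p i ^ e i)) → ∀ i, ZMod (p i ^ e i)) :=
        DFunLike.coe_injective
      exact Finite.of_injective _ hinj
    match n, eqv with
    | 0, eqv =>
      haveI : Finite (Fin 0 →₀ ℤ) := by
        haveI : Subsingleton (Fin 0 →₀ ℤ) :=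
          ⟨fun x y => Finsupp.ext fun i => Fin.elim0 i⟩
        infer_instance
      have : Finite (Additive (Abelianization G)) := Finite.of_equiv _ eqv.toEquiv.symm
      exact habfin (Finite.of_equiv _ (Additive.ofMul (α := Abelianization G)).symm)
    | (n + 1), eqv =>
      set f : Additive (Abelianization G) →+ ℤ :=
        (Finsupp.applyAddHom (0 : Fin (n + 1))).comp
          ((AddMonoidHom.fst _ _).comp eqv.toAddMonoidHom) with hf
      set F : G → ℤ := fun g => f (Additive.ofMul (Abelianization.of g)) with hFdef
      have hFadd : ∀ x y : G, F (x * y) = F x + F y := by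
        intro x y
        simp [hFdef, map_mul]
      set a₀ : Additive (Abelianization G) := eqv.symm (Finsupp.single 0 1, 0) with ha₀
      obtain ⟨g₀, hg₀⟩ := hsurj (Additive.toMul a₀)
      have hFg₀ : F g₀ = 1 := by
        have : Additive.ofMul (Abelianization.of g₀) = a₀ := by
          rw [hg₀]; rfl
        rw [hFdef]
        show f (Additive.ofMul (Abelianization.of g₀)) = 1
        rw [this, hf]
        simp [ha₀]
      exact NPaux.key F hFadd g₀ hFg₀ hfin
  -- Step 3: finish.
  haveI : Finite (G ⧸ commutator G) := habfin
  exact Finite.of_equiv _ (Subgroup.groupEquivQuotientProdSubgroup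
    (s := commutator G)).symm
end
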